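/- arXiv:2209.04668 — 7 statements merged into one kernel-verified Lean document; each statement's English description precedes it below -/
import Mathlib

section
/- Let G be a connected finite simple graph with normalized Laplacian 𝓛, let τ be a real number, let a and b be vertices, and let γ be a complex number. If exp(i τ 𝓛) e_a = γ • e_b (where the exponential is the matrix exponential of the complex matrix i τ 𝓛 and e_a, e_b are standard basis vectors), then γ = 1. -/
open Matrix

/-- The normalized Laplacian `𝓛 = D^{-1/2}(D − A)D^{-1/2}` of a simple graph. -/
noncomputable def normLap {V : Type*} [Fintype V] [DecidableEq V]
    (G : SimpleGraph V) [DecidableRel G.Adj] : Matrix V V ℝ :=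
  Matrix.diagonal (fun v => (Real.sqrt (G.degree v))⁻¹) *
    (Matrix.diagonal (fun v => (G.degree v : ℝ)) - G.adjMatrix ℝ) *
    Matrix.diagonal (fun v => (Real.sqrt (G.degree v))⁻¹)

/-- The quantum walk transition matrix `U(t) = exp(i t 𝓛)`. -/
noncomputable def qwalk {V : Type*} [Fintype V] [DecidableEq V]
    (G : SimpleGraph V) [DecidableRel G.Adj] (t : ℝ) : Matrix V V ℂ :=
  NormedSpace.exp ((Complex.I * (t : ℂ)) • (normLap G).map Complex.ofReal)

/-- `θ` lies in the eigenvalue support of vertex `a` for the symmetric matrix `L`: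
some eigenvector of `L` for `θ` has nonzero entry at `a`. -/
def inSupport {V : Type*} [Fintype V] (L : Matrix V V ℝ) (a : V) (θ : ℝ) : Prop :=
  ∃ v : V → ℝ, v ≠ 0 ∧ L.mulVec v = θ • v ∧ v a ≠ 0

/-- Vertices `a` and `b` are strongly cospectral with respect to `L`. -/
def StronglyCospectral {V : Type*} [Fintype V] (L : Matrix V V ℝ) (a b : V) : Prop :=
  ∀ θ : ℝ, (∀ v : V → ℝ, L.mulVec v = θ • v → v a = v b) ∨
           (∀ v : V → ℝ, L.mulVec v = θ • v → v a = - v b)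

/-- `θ` is in the positive eigenvalue support `S⁺` of strongly cospectral vertices `a, b`. -/
def Splus {V : Type*} [Fintype V] (L : Matrix V V ℝ) (a b : V) (θ : ℝ) : Prop :=
  inSupport L a θ ∧ ∀ v : V → ℝ, L.mulVec v = θ • v → v a = v b

/-- `θ` is in the negative eigenvalue support `S⁻` of strongly cospectral vertices `a, b`. -/
def Sminus {V : Type*} [Fintype V] (L : Matrix V V ℝ) (a b : V) (θ : ℝ) : Prop :=
  inSupport L a θ ∧ ∀ v : V → ℝ, L.mulVec v = θ • v → v a = - v b

/-- Perfect state transfer from `a` to `b` at time `τ`. -/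
noncomputable def PST {V : Type*} [Fintype V] [DecidableEq V]
    (G : SimpleGraph V) [DecidableRel G.Adj] (a b : V) (τ : ℝ) : Prop :=
  ∃ γ : ℂ, ‖γ‖ = 1 ∧ (qwalk G τ).mulVec (Pi.single a 1) = γ • (Pi.single b 1 : V → ℂ)

/-- `m`: the lcm of the denominators of a finite set of rationals. -/
def mOf (T : Finset ℚ) : ℕ := T.lcm fun q => q.den

/-- `g`: the gcd of the integers `m·θ` for `θ ∈ T`. -/
def gOf (T : Finset ℚ) : ℤ := T.gcd fun q => ((mOf T : ℚ) * q).num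

section Aux

open NormedSpace

lemma aux_exp_mulVec_fixed {V : Type*} [Fintype V] [DecidableEq V] (A : Matrix V V ℂ)
    (w : V → ℂ) (hw : A.mulVec w = 0) : (exp A).mulVec w = w := by
  classical
  letI : SeminormedRing (Matrix V V ℂ) := Matrix.linftyOpSemiNormedRing
  letI : NormedRing (Matrix V V ℂ) := Matrix.linftyOpNormedRing
  letI : NormedAlgebra ℂ (Matrix V V ℂ) := Matrix.linftyOpNormedAlgebra
  let f : Matrix V V ℂ →ₗ[ℂ] (V → ℂ) :=
    { toFun := fun M => M.mulVec w
      map_add' := fun M N => Matrix.add_mulVec M N w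
      map_smul' := fun c M => Matrix.smul_mulVec c M w }
  let F : Matrix V V ℂ →L[ℂ] (V → ℂ) := f.toContinuousLinearMap
  have hsum : Summable fun n : ℕ => (n.factorial⁻¹ : ℂ) • A ^ n :=
    NormedSpace.expSeries_summable' A
  have h1 : (exp A).mulVec w = ∑' n : ℕ, F ((n.factorial⁻¹ : ℂ) • A ^ n) := by
    rw [exp_eq_tsum ℂ]
    exact (F.map_tsum hsum).symm ▸ rfl
  rw [h1]
  have h2 : ∀ n : ℕ, F ((n.factorial⁻¹ : ℂ) • A ^ n) = if n = 0 then w else 0 := by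
    intro n
    cases n with
    | zero => simp [F, f, Matrix.one_mulVec]
    | succ k =>
      have hp : A ^ (k+1) = A ^ k * A := pow_succ A k
      simp only [F, f, LinearMap.coe_mk, AddHom.coe_mk, LinearMap.coe_toContinuousLinearMap',
        hp]
      rw [Matrix.smul_mulVec, ← Matrix.mulVec_mulVec, hw, Matrix.mulVec_zero, smul_zero]
      simp
  calc (∑' n : ℕ, F ((n.factorial⁻¹ : ℂ) • A ^ n)) = ∑' n : ℕ, if n = 0 then w else 0 :=
        tsum_congr h2
    _ = w := by rw [tsum_eq_single 0 (by intro b hb; simp [hb])]; simp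

lemma aux_normLap_symm {V : Type*} [Fintype V] [DecidableEq V]
    (G : SimpleGraph V) [DecidableRel G.Adj] : (normLap G)ᵀ = normLap G := by
  set M : Matrix V V ℝ := Matrix.diagonal (fun v => (G.degree v : ℝ)) - G.adjMatrix ℝ with hMdef
  have hM : Mᵀ = M := by
    rw [hMdef, Matrix.transpose_sub, Matrix.diagonal_transpose, SimpleGraph.transpose_adjMatrix]
  have key : ∀ i j, normLap G i j
      = (Real.sqrt (G.degree i))⁻¹ * M i j * (Real.sqrt (G.degree j))⁻¹ := fun i j => by
    rw [normLap, Matrix.mul_diagonal, Matrix.diagonal_mul]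
  ext i j
  rw [Matrix.transpose_apply, key, key]
  have : M j i = M i j := by conv_lhs => rw [← hM, Matrix.transpose_apply]
  rw [this]; ring

lemma aux_normLap_mulVec_sqrtDeg {V : Type*} [Fintype V] [DecidableEq V]
    (G : SimpleGraph V) [DecidableRel G.Adj] (hdeg : ∀ v, 0 < G.degree v) :
    (normLap G).mulVec (fun v => Real.sqrt (G.degree v)) = 0 := by
  have h1 : Matrix.diagonal (fun v => (Real.sqrt (G.degree v))⁻¹) *ᵥ
      (fun v => Real.sqrt (G.degree v)) = fun _ => 1 := by
    ext i
    rw [Matrix.mulVec_diagonal]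
    exact inv_mul_cancel₀ (ne_of_gt (Real.sqrt_pos.2 (by exact_mod_cast hdeg i)))
  have h2 : (Matrix.diagonal (fun v => (G.degree v : ℝ)) - G.adjMatrix ℝ) *ᵥ
      (fun _ => (1:ℝ)) = 0 := by
    ext i
    rw [Matrix.sub_mulVec]
    simp [Matrix.mulVec_diagonal]
  rw [normLap, ← Matrix.mulVec_mulVec, ← Matrix.mulVec_mulVec, h1, h2, Matrix.mulVec_zero]

end Aux

/-- for a connected graph, if `U(τ) e_a = γ • e_b` then `γ = 1`. -/
theorem pst_phase_eq_one {V : Type*} [Fintype V] [DecidableEq V]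
    (G : SimpleGraph V) [DecidableRel G.Adj] (hG : G.Connected)
    (τ : ℝ) (a b : V) (γ : ℂ)
    (h : (qwalk G τ).mulVec (Pi.single a 1) = γ • (Pi.single b 1 : V → ℂ)) :
    γ = 1 := by
  classical
  letI : SeminormedRing (Matrix V V ℂ) := Matrix.linftyOpSemiNormedRing
  letI : NormedRing (Matrix V V ℂ) := Matrix.linftyOpNormedRing
  letI : NormedAlgebra ℂ (Matrix V V ℂ) := Matrix.linftyOpNormedAlgebra
  set L : Matrix V V ℂ := (normLap G).map Complex.ofReal with hLdef
  set A : Matrix V V ℂ := (Complex.I * (τ : ℂ)) • L with hAdef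
  have hqw : qwalk G τ = NormedSpace.exp A := rfl
  rcases subsingleton_or_nontrivial V with hV | hV
  · -- subsingleton case: normLap = 0
    have hdeg0 : ∀ v, G.degree v = 0 := by
      intro v
      rw [SimpleGraph.degree, Finset.card_eq_zero]
      ext w
      simp only [SimpleGraph.mem_neighborFinset, Finset.notMem_empty, iff_false]
      intro hadj
      exact G.loopless.irrefl v (Subsingleton.elim w v ▸ hadj)
    have hA0 : normLap G = 0 := by
      have : (Matrix.diagonal (fun v => (G.degree v : ℝ)) - G.adjMatrix ℝ) = 0 := by
        ext i j
        have hij : i = j := Subsingleton.elim i j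
        subst hij
        simp [hdeg0 i]
      rw [normLap, this, Matrix.mul_zero, Matrix.zero_mul]
    have hU1 : qwalk G τ = 1 := by
      rw [hqw, hAdef, hLdef, hA0]
      rw [Matrix.map_zero _ Complex.ofReal_zero, smul_zero]
      exact NormedSpace.exp_zero
    rw [hU1, Matrix.one_mulVec] at h
    have hab : a = b := Subsingleton.elim a b
    have h1 := congrFun h a
    rw [hab] at h1
    simp only [Pi.single_eq_same, Pi.smul_apply, smul_eq_mul, mul_one] at h1
    exact h1.symm
  · -- nontrivial case
    have hdeg : ∀ v, 0 < G.degree v := by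
      intro v
      obtain ⟨u, hu⟩ := exists_ne v
      obtain ⟨p⟩ := hG.preconnected v u
      rw [SimpleGraph.degree_pos_iff_exists_adj]
      cases p with
      | nil => exact absurd rfl hu
      | cons h' _ => exact ⟨_, h'⟩
    -- L is Hermitian and symmetric
    have hLsymm : Lᵀ = L := by
      rw [hLdef, ← Matrix.transpose_map, aux_normLap_symm]
    have hLherm : Lᴴ = L := by
      rw [Matrix.conjTranspose]
      have : (L.map star) = L := by
        ext i j
        simp [hLdef, Matrix.map_apply, Complex.conj_ofReal]
      rw [← Matrix.transpose_map]
      calc (L.map star)ᵀ = Lᵀ := by rw [this]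
        _ = L := hLsymm
    have hAH : Aᴴ = -A := by
      rw [hAdef, Matrix.conjTranspose_smul, hLherm, ← neg_smul]
      congr 1
      simp [_root_.map_mul]
    -- |γ|² = 1
    have hUinv : NormedSpace.exp (-A) * NormedSpace.exp A = 1 := by
      rw [← Matrix.exp_add_of_commute _ _ (Commute.neg_left (Commute.refl A)),
        neg_add_cancel]
      exact NormedSpace.exp_zero
    have hUba : (NormedSpace.exp A) b a = γ := by
      have := congrFun h b
      rw [hqw, Matrix.mulVec_single_one] at this
      simpa using this
    have hconj : γ * (starRingEnd ℂ) γ = 1 := by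
      have h2 : (NormedSpace.exp (-A)).mulVec ((NormedSpace.exp A).mulVec (Pi.single a 1))
          = (NormedSpace.exp (-A)).mulVec (γ • (Pi.single b 1 : V → ℂ)) := by
        rw [← hqw, h]
      rw [Matrix.mulVec_mulVec, hUinv, Matrix.one_mulVec, Matrix.mulVec_smul] at h2
      have h3 := congrFun h2 a
      rw [Pi.smul_apply, Matrix.mulVec_single_one] at h3
      have hexpnegA : NormedSpace.exp (-A) = (NormedSpace.exp A)ᴴ := by
        rw [← hAH, Matrix.exp_conjTranspose]
      rw [hexpnegA] at h3
      simp only [Matrix.col_apply, Matrix.transpose_apply, Matrix.conjTranspose_apply, hUba,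
        Pi.single_eq_same, smul_eq_mul] at h3
      exact h3.symm
    -- eigenvector of eigenvalue 0
    set w : V → ℂ := Complex.ofReal ∘ (fun v => Real.sqrt (G.degree v)) with hwdef
    have hLw : L.mulVec w = 0 := by
      ext i
      rw [hLdef, hwdef]
      have := (RingHom.map_mulVec (algebraMap ℝ ℂ) (normLap G)
        (fun v => Real.sqrt (G.degree v)) i).symm
      simp only [Complex.coe_algebraMap] at this
      rw [this, aux_normLap_mulVec_sqrtDeg G hdeg]
      simp
    have hAw : A.mulVec w = 0 := by
      rw [hAdef, Matrix.smul_mulVec, hLw, smul_zero]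
    have hUw : (NormedSpace.exp A).mulVec w = w := aux_exp_mulVec_fixed A w hAw
    -- symmetry of exp
    have hUsymm : (NormedSpace.exp A)ᵀ = NormedSpace.exp A := by
      rw [← Matrix.exp_transpose]
      congr 1
      rw [hAdef, Matrix.transpose_smul, hLsymm]
    -- dot with w
    have hdot : w ⬝ᵥ ((qwalk G τ).mulVec (Pi.single a 1)) = w a := by
      rw [Matrix.dotProduct_mulVec, ← Matrix.mulVec_transpose, hqw, hUsymm, hUw,
        dotProduct_single, mul_one]
    have hdot2 : w ⬝ᵥ (γ • (Pi.single b 1 : V → ℂ)) = γ * w b := by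
      rw [dotProduct_smul, smul_eq_mul, dotProduct_single, mul_one]
    have hreal : γ * w b = w a := by rw [← hdot2, ← h, hdot]
    -- conclude
    have hwb : w b = (Real.sqrt (G.degree b) : ℂ) := rfl
    have hwa : w a = (Real.sqrt (G.degree a) : ℂ) := rfl
    have hsb : (0:ℝ) < Real.sqrt (G.degree b) := Real.sqrt_pos.2 (by exact_mod_cast hdeg b)
    have hsa : (0:ℝ) < Real.sqrt (G.degree a) := Real.sqrt_pos.2 (by exact_mod_cast hdeg a)
    set r : ℝ := Real.sqrt (G.degree a) / Real.sqrt (G.degree b) with hrdef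
    have hγr : γ = (r : ℂ) := by
      rw [hrdef]
      push_cast
      rw [eq_div_iff (by exact_mod_cast hsb.ne')]
      rw [← hwa, ← hwb, hreal]
    have hr2 : r ^ 2 = 1 := by
      have : ((r:ℂ)) * (starRingEnd ℂ) (r:ℂ) = 1 := by rw [← hγr]; exact hconj
      rw [Complex.conj_ofReal] at this
      have : ((r^2 : ℝ) : ℂ) = ((1:ℝ):ℂ) := by push_cast; rw [← this]; ring
      exact_mod_cast this
    have hrpos : 0 < r := div_pos hsa hsb
    have hr1 : r = 1 := by
      rcases sq_eq_one_iff.1 hr2 with h1 | h1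
      · exact h1
      · exfalso; rw [h1] at hrpos; linarith
    rw [hγr, hr1]; norm_num
end

section
/- Let G be a connected finite simple graph on at least two vertices with normalized Laplacian 𝓛, let a be a vertex, and suppose every eigenvalue in the eigenvalue support S of a is rational. Let m be the least common multiple of the denominators (in lowest terms) of the elements of S, and let g be the greatest common divisor of the integers m·θ for θ ∈ S. Then τ₀ = 2mπ/g is the smallest positive real number τ with exp(i τ 𝓛) e_a = e_a, and every positive time τ at which exp(i τ 𝓛) e_a = e_a is an integer multiple of τ₀. -/
open Matrix

lemma mOf_pos (T : Finset ℚ) : 0 < mOf T := by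
  rw [Nat.pos_iff_ne_zero]
  intro h
  rw [mOf, Finset.lcm_eq_zero_iff] at h
  obtain ⟨q, _, hq⟩ := h
  exact q.den_nz hq

lemma den_mul_self (q : ℚ) : (q.den : ℚ) * q = (q.num : ℚ) := by
  have h : (q.num : ℚ) / (q.den : ℚ) = q := Rat.num_div_den q
  have hd : (q.den : ℚ) ≠ 0 := by exact_mod_cast q.den_nz
  rw [div_eq_iff hd] at h
  linarith [h]

lemma mq_int {T : Finset ℚ} {q : ℚ} (hq : q ∈ T) :
    ((mOf T : ℚ) * q) = (((mOf T : ℚ) * q).num : ℚ) := by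
  obtain ⟨c, hc⟩ : q.den ∣ mOf T := Finset.dvd_lcm (f := fun q : ℚ => q.den) hq
  have key : (mOf T : ℚ) * q = (((c : ℤ) * q.num : ℤ) : ℚ) := by
    calc (mOf T : ℚ) * q = (c : ℚ) * ((q.den : ℚ) * q) := by rw [hc]; push_cast; ring
    _ = (c : ℚ) * (q.num : ℚ) := by rw [den_mul_self]
    _ = (((c : ℤ) * q.num : ℤ) : ℚ) := by push_cast; ring
  rw [key, Rat.num_intCast]

lemma gOf_nonneg (T : Finset ℚ) : 0 ≤ gOf T := by
  have := Finset.normalize_gcd (s := T) (f := fun q => ((mOf T : ℚ) * q).num)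
  rw [gOf, ← this, ← Int.abs_eq_normalize]
  exact abs_nonneg _

lemma gOf_pos {T : Finset ℚ} (h : ∃ q ∈ T, q ≠ 0) : 0 < gOf T := by
  rcases h with ⟨q, hqT, hq⟩
  rcases lt_or_eq_of_le (gOf_nonneg T) with h | h
  · exact h
  exfalso
  have h0 : T.gcd (fun q => ((mOf T : ℚ) * q).num) = 0 := h.symm ▸ rfl
  rw [Finset.gcd_eq_zero_iff] at h0
  have := h0 q hqT
  rw [Rat.num_eq_zero, mul_eq_zero] at this
  rcases this with h' | h'
  · exact absurd h' (by exact_mod_cast (mOf_pos T).ne')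
  · exact hq h'

/-- gcd Bezout-style propagation. -/
lemma gcd_rel (c τ : ℝ) (n : ℚ → ℤ) (T : Finset ℚ)
    (h : ∀ q ∈ T, ∃ k : ℤ, τ * (n q : ℝ) = c * k) :
    ∃ k : ℤ, τ * ((T.gcd n : ℤ) : ℝ) = c * k := by
  classical
  induction T using Finset.induction_on with
  | empty => exact ⟨0, by simp⟩
  | insert a s hnotmem ih =>
    obtain ⟨k₁, hk₁⟩ := h a (Finset.mem_insert_self a s)
    obtain ⟨k₂, hk₂⟩ := ih (fun q hq => h q (Finset.mem_insert_of_mem hq))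
    rw [Finset.gcd_insert]
    set x := n a
    set y := s.gcd n
    refine ⟨k₁ * Int.gcdA x y + k₂ * Int.gcdB x y, ?_⟩
    have hgcd : (GCDMonoid.gcd x y : ℤ) = x * Int.gcdA x y + y * Int.gcdB x y := by
      rw [← Int.gcd_eq_gcd_ab]; rfl
    rw [hgcd]
    push_cast
    linear_combination (Int.gcdA x y : ℝ) * hk₁ + (Int.gcdB x y : ℝ) * hk₂





section Spectral

variable {V : Type*} [Fintype V] [DecidableEq V]
    (G : SimpleGraph V) [DecidableRel G.Adj]

lemma normLap_isSymm : (normLap G).IsSymm := by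
  unfold normLap
  rw [Matrix.IsSymm, transpose_mul, transpose_mul, diagonal_transpose, transpose_sub, diagonal_transpose, SimpleGraph.transpose_adjMatrix, mul_assoc]

lemma normLap_herm : ((normLap G).map Complex.ofReal).IsHermitian := by
  have hs := normLap_isSymm G
  ext i j
  rw [conjTranspose_apply, Matrix.map_apply, Matrix.map_apply, Complex.star_def,
    Complex.conj_ofReal, hs.apply i j]

lemma normLap_apply_self {a : V} (h : 0 < G.degree a) : normLap G a a = 1 := by
  have h0 : (0:ℝ) < (G.degree a : ℝ) := by exact_mod_cast h
  have hs : Real.sqrt (G.degree a) ≠ 0 := by positivity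
  unfold normLap
  rw [mul_diagonal, diagonal_mul, Matrix.sub_apply, diagonal_apply_eq, SimpleGraph.adjMatrix_apply,
    if_neg (G.loopless.irrefl a)]
  rw [show ((G.degree a : ℝ) - 0) = Real.sqrt (G.degree a) * Real.sqrt (G.degree a) by
    rw [Real.mul_self_sqrt h0.le]; ring]
  field_simp

end Spectral

section Main

variable {V : Type*} [Fintype V] [DecidableEq V]
    (G : SimpleGraph V) [DecidableRel G.Adj]

lemma period_iff_T (hG : G.Connected) (hcard : 2 ≤ Fintype.card V) (a : V) (T : Finset ℚ)
    (hT : ∀ θ : ℝ, inSupport (normLap G) a θ ↔ ∃ q ∈ T, (q : ℝ) = θ) :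
    (∃ q ∈ T, q ≠ 0) ∧ ∀ τ : ℝ,
      ((qwalk G τ).mulVec (Pi.single a 1) = (Pi.single a 1 : V → ℂ) ↔
       ∀ q ∈ T, ∃ k : ℤ, τ * (q : ℝ) = 2 * Real.pi * k) := by
  classical
  set L := normLap G with hLdef
  set Lc := L.map Complex.ofReal with hLcdef
  have hherm : Lc.IsHermitian := normLap_herm G
  set U : Matrix V V ℂ := (hherm.eigenvectorUnitary : Matrix V V ℂ) with hUdef
  set θ : V → ℝ := hherm.eigenvalues with hθdef
  set d : V → ℂ := fun j => ((θ j : ℝ) : ℂ) with hddef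
  have hspec : Lc = U * diagonal d * star U := by
    have := hherm.spectral_theorem
    rw [Unitary.conjStarAlgAut_apply] at this
    exact this
  have hU1 : U * star U = 1 := Matrix.mem_unitaryGroup_iff.mp hherm.eigenvectorUnitary.2
  have hU2 : star U * U = 1 := Matrix.mem_unitaryGroup_iff'.mp hherm.eigenvectorUnitary.2
  set e : V → ℂ := Pi.single a 1 with hedef
  set w : V → ℂ := star U *ᵥ e with hwdef
  have hw : ∀ j, w j = star (U a j) := by
    intro j
    rw [hwdef, hedef, mulVec_single]
    simp [star_apply]
  -- support characterization
  have hLU : Lc * U = U * diagonal d := by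
    rw [hspec, mul_assoc, mul_assoc, hU2, mul_one]
  have hsUL : star U * Lc = diagonal d * star U := by
    rw [hspec, ← mul_assoc, ← mul_assoc, hU2, one_mul]
  have hsupp : ∀ θ0 : ℝ, inSupport L a θ0 ↔ ∃ j, θ j = θ0 ∧ w j ≠ 0 := by
    intro θ0
    constructor
    · rintro ⟨v, hv0, hvE, hva⟩
      by_contra hcon
      push_neg at hcon
      set vc : V → ℂ := fun k => ((v k : ℝ) : ℂ) with hvcdef
      have hvcE : Lc *ᵥ vc = ((θ0 : ℝ) : ℂ) • vc := by
        ext k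
        have h1 := congrFun hvE k
        simp only [mulVec, dotProduct, Pi.smul_apply, smul_eq_mul] at h1 ⊢
        simp only [hvcdef, Matrix.map_apply, hLcdef]
        exact_mod_cast congrArg (fun x : ℝ => (x : ℂ)) h1
      set c : V → ℂ := star U *ᵥ vc with hcdef
      have hc1 : diagonal d *ᵥ c = ((θ0 : ℝ) : ℂ) • c := by
        rw [hcdef, mulVec_mulVec, ← hsUL, ← mulVec_mulVec, hvcE, mulVec_smul]
      have hc0 : ∀ j, θ j ≠ θ0 → c j = 0 := by
        intro j hj
        have h2 := congrFun hc1 j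
        rw [mulVec_diagonal] at h2
        have hdj : d j ≠ ((θ0 : ℝ) : ℂ) := by
          simp only [hddef, ne_eq, Complex.ofReal_inj]
          exact hj
        have h3 : (d j - ((θ0 : ℝ) : ℂ)) * c j = 0 := by
          simp only [Pi.smul_apply, smul_eq_mul] at h2
          ring_nf
          linear_combination h2
        rcases mul_eq_zero.mp h3 with h | h
        · exact absurd (sub_eq_zero.mp h) hdj
        · exact h
      have hvc : vc = U *ᵥ c := by
        rw [hcdef, mulVec_mulVec, hU1, one_mulVec]
      have hva0 : vc a = 0 := by
        rw [hvc]
        simp only [mulVec, dotProduct]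
        refine Finset.sum_eq_zero fun j _ => ?_
        rcases eq_or_ne (θ j) θ0 with h | h
        · have := hcon j h
          rw [hw j, star_eq_zero] at this
          rw [this, zero_mul]
        · rw [hc0 j h, mul_zero]
      have hva0' : ((v a : ℝ) : ℂ) = 0 := hva0
      exact hva (Complex.ofReal_eq_zero.mp hva0')
    · rintro ⟨j, hθj, hwj⟩
      have hcol : Lc *ᵥ (fun k => U k j) = d j • (fun k => U k j) := by
        ext k
        have h1 : (Lc * U) k j = (U * diagonal d) k j := by rw [hLU]
        rw [mul_diagonal] at h1
        simp only [mulVec, dotProduct, Pi.smul_apply, smul_eq_mul, mul_apply] at h1 ⊢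
        rw [h1]; ring
      have hUaj : U a j ≠ 0 := by
        intro h; exact hwj (by rw [hw j, h, star_zero])
      have key : ∀ (f : ℂ →+ ℝ), (∀ r : ℝ, ∀ z : ℂ, f ((r:ℂ) * z) = r * f z) →
          L *ᵥ (fun k => f (U k j)) = θ0 • (fun k => f (U k j)) := by
        intro f hf
        ext k
        have h1 := congrFun hcol k
        simp only [mulVec, dotProduct, Pi.smul_apply, smul_eq_mul] at h1 ⊢
        have h3 : ∀ l, (L k l) * f (U l j) = f (Lc k l * U l j) := by
          intro l; rw [hLcdef, Matrix.map_apply, hf]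
        rw [Finset.sum_congr rfl (fun l _ => h3 l), ← map_sum, h1]
        show f (((θ j : ℝ) : ℂ) * U k j) = θ0 * f (U k j)
        rw [hθj, hf]
      rcases eq_or_ne ((U a j).re) 0 with h | h
      · have him : (U a j).im ≠ 0 := by
          intro h'
          exact hUaj (Complex.ext h h')
        refine ⟨fun k => Complex.imAddGroupHom (U k j), ?_, key Complex.imAddGroupHom
          (fun r z => Complex.im_ofReal_mul r z), him⟩
        intro hzero
        exact him (congrFun hzero a)
      · refine ⟨fun k => Complex.reAddGroupHom (U k j), ?_, key Complex.reAddGroupHom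
          (fun r z => Complex.re_ofReal_mul r z), h⟩
        intro hzero
        exact h (congrFun hzero a)
  -- the support is exactly given by T
  have hTiff : ∀ q ∈ T, ∃ j, θ j = (q : ℝ) ∧ w j ≠ 0 :=
    fun q hq => (hsupp ((q : ℝ))).mp ((hT (q : ℝ)).mpr ⟨q, hq, rfl⟩)
  have hjq : ∀ j, w j ≠ 0 → ∃ q ∈ T, (q : ℝ) = θ j :=
    fun j hj => (hT (θ j)).mp ((hsupp (θ j)).mpr ⟨j, rfl, hj⟩)
  -- degree of a is positive
  have hdeg : 0 < G.degree a := by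
    obtain ⟨b, hb⟩ := Fintype.exists_ne_of_one_lt_card (by omega) a
    have hr : G.Reachable a b := hG.preconnected a b
    obtain ⟨p⟩ := hr
    cases p with
    | nil => exact absurd rfl hb
    | cons hadj p =>
      rw [G.degree_pos_iff_exists_adj]
      exact ⟨_, hadj⟩
  -- T has a nonzero element
  have hTne : ∃ q ∈ T, q ≠ 0 := by
    by_contra hcon
    push_neg at hcon
    have hdm : ∀ j, d j * w j = 0 := by
      intro j
      rcases eq_or_ne (w j) 0 with h | h
      · rw [h, mul_zero]
      · obtain ⟨q, hqT, hq⟩ := hjq j h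
        have : θ j = 0 := by rw [← hq, hcon q hqT]; norm_num
        show ((θ j : ℝ) : ℂ) * w j = 0
        rw [this]; simp
    have hLce : Lc *ᵥ e = 0 := by
      rw [hspec, ← mulVec_mulVec, ← mulVec_mulVec, ← hwdef]
      have : diagonal d *ᵥ w = 0 := by
        ext j; rw [mulVec_diagonal]; exact hdm j
      rw [this, mulVec_zero]
    have h1 : Lc a a = 0 := by
      have := congrFun hLce a
      rw [hedef, mulVec_single] at this
      simpa using this
    rw [hLcdef, Matrix.map_apply, hLdef, normLap_apply_self G hdeg] at h1
    exact one_ne_zero (Complex.ofReal_eq_zero.mp (by exact_mod_cast h1))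
  refine ⟨hTne, fun τ => ?_⟩
  -- expand the quantum walk
  set Uu : (Matrix V V ℂ)ˣ := ⟨U, star U, hU1, hU2⟩ with hUudef
  have hqwalk : qwalk G τ =
      U * diagonal (fun j => Complex.exp (Complex.I * τ * d j)) * star U := by
    rw [qwalk, ← hLdef, ← hLcdef]
    have hdiag : (Complex.I * (τ:ℂ)) • diagonal d =
        diagonal (fun j => (Complex.I * (τ:ℂ)) * d j) := by
      rw [← diagonal_smul]; rfl
    have hL2 : (Complex.I * (τ:ℂ)) • Lc =
        U * diagonal (fun j => (Complex.I * (τ:ℂ)) * d j) * star U := by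
      rw [hspec, ← hdiag, ← smul_mul_assoc, ← mul_smul_comm]
    rw [hL2]
    refine (Matrix.exp_units_conj Uu _ : _).trans ?_
    show U * NormedSpace.exp (diagonal fun j => Complex.I * (τ:ℂ) * d j) * star U = _
    have hexp : (NormedSpace.exp (fun j => Complex.I * (τ:ℂ) * d j) : V → ℂ) =
        fun j => Complex.exp (Complex.I * τ * d j) := by
      rw [Pi.exp_def]
      funext j
      rw [Complex.exp_eq_exp_ℂ]
    rw [Matrix.exp_diagonal, hexp]
  -- the period condition in terms of eigenvalues
  have hper : (qwalk G τ) *ᵥ e = e ↔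
      ∀ j, w j ≠ 0 → Complex.exp (Complex.I * τ * d j) = 1 := by
    rw [hqwalk, ← mulVec_mulVec, ← mulVec_mulVec, ← hwdef]
    constructor
    · intro h j hwj
      have h2 : star U *ᵥ (U *ᵥ (diagonal (fun j => Complex.exp (Complex.I * τ * d j)) *ᵥ w))
          = star U *ᵥ e := by rw [h]
      rw [mulVec_mulVec, hU2, one_mulVec, ← hwdef] at h2
      have h3 := congrFun h2 j
      rw [mulVec_diagonal] at h3
      have h4 : (Complex.exp (Complex.I * τ * d j) - 1) * w j = 0 := by
        linear_combination h3
      rcases mul_eq_zero.mp h4 with h5 | h5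
      · exact sub_eq_zero.mp h5
      · exact absurd h5 hwj
    · intro h
      have h2 : diagonal (fun j => Complex.exp (Complex.I * τ * d j)) *ᵥ w = w := by
        ext j
        rw [mulVec_diagonal]
        rcases eq_or_ne (w j) 0 with h5 | h5
        · rw [h5, mul_zero]
        · rw [h j h5, one_mul]
      rw [h2, hwdef, mulVec_mulVec, hU1, one_mulVec]
  rw [hper]
  constructor
  · intro h q hq
    obtain ⟨j, hθj, hwj⟩ := hTiff q hq
    have h1 := h j hwj
    rw [Complex.exp_eq_one_iff] at h1
    obtain ⟨n, hn⟩ := h1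
    refine ⟨n, ?_⟩
    have h2 : Complex.I * τ * ((θ j : ℝ) : ℂ) = n * (2 * Real.pi * Complex.I) := by
      convert hn using 2
    have h3 := congrArg Complex.im h2
    simp [Complex.mul_im, Complex.mul_re] at h3
    rw [hθj] at h3
    linarith [h3]
  · intro h j hwj
    obtain ⟨q, hqT, hq⟩ := hjq j hwj
    obtain ⟨k, hk⟩ := h q hqT
    rw [Complex.exp_eq_one_iff]
    refine ⟨k, ?_⟩
    show Complex.I * τ * ((θ j : ℝ) : ℂ) = k * (2 * Real.pi * Complex.I)
    rw [← hq]
    have hk' : ((τ * (q:ℝ) : ℝ) : ℂ) = ((2 * Real.pi * k : ℝ) : ℂ) := by exact_mod_cast hk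
    push_cast at hk' ⊢
    linear_combination Complex.I * hk'


end Main


lemma period_iff_int (T : Finset ℚ) (hne : ∃ q ∈ T, q ≠ 0) (τ : ℝ) :
    (∀ q ∈ T, ∃ k : ℤ, τ * (q : ℝ) = 2 * Real.pi * k) ↔
    (∃ n : ℤ, τ = n * (2 * (mOf T : ℝ) * Real.pi / (gOf T : ℝ))) := by
  have hg : (0:ℝ) < (gOf T : ℝ) := by exact_mod_cast gOf_pos hne
  have hm : (0:ℝ) < (mOf T : ℝ) := by exact_mod_cast mOf_pos T
  constructor
  · intro h
    have h2 : ∀ q ∈ T, ∃ k : ℤ,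
        τ * (((((mOf T : ℚ)) * q).num : ℤ) : ℝ) = (2 * Real.pi * (mOf T : ℝ)) * k := by
      intro q hq
      obtain ⟨k, hk⟩ := h q hq
      refine ⟨k, ?_⟩
      have hcast : (((((mOf T : ℚ)) * q).num : ℤ) : ℝ) = (mOf T : ℝ) * (q : ℝ) := by
        exact_mod_cast congrArg (fun x : ℚ => (x : ℝ)) (mq_int hq).symm
      rw [hcast]
      linear_combination (mOf T : ℝ) * hk
    obtain ⟨K, hK⟩ := gcd_rel (2 * Real.pi * (mOf T : ℝ)) τ _ T h2
    refine ⟨K, ?_⟩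
    have hKg : τ * ((gOf T : ℤ) : ℝ) = (2 * Real.pi * (mOf T : ℝ)) * K := hK
    rw [show τ = (2 * Real.pi * (mOf T : ℝ) * K) / (gOf T : ℝ) from by
      rw [eq_div_iff hg.ne']; linear_combination hKg]
    field_simp
  · rintro ⟨n, rfl⟩
    intro q hq
    obtain ⟨dd, hdd⟩ : gOf T ∣ (((mOf T : ℚ)) * q).num := Finset.gcd_dvd hq
    refine ⟨n * dd, ?_⟩
    have key : (mOf T : ℝ) * (q : ℝ) = (gOf T : ℝ) * (dd : ℝ) := by
      have h1 : (((((mOf T : ℚ)) * q).num : ℤ) : ℝ) = (mOf T : ℝ) * (q : ℝ) := by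
        exact_mod_cast congrArg (fun x : ℚ => (x : ℝ)) (mq_int hq).symm
      rw [← h1]
      exact_mod_cast congrArg (fun x : ℤ => (x : ℝ)) hdd
    have hgne : (gOf T : ℝ) ≠ 0 := hg.ne'
    push_cast
    field_simp
    linear_combination (n : ℝ) * key


/-- if the eigenvalue support of `a` consists of the rationals in `T`,
then `τ₀ = 2mπ/g` is the smallest positive period of `a`, and every positive period
is an integer multiple of `τ₀`. -/
theorem minimal_period_of_rational_support {V : Type*} [Fintype V] [DecidableEq V]
    (G : SimpleGraph V) [DecidableRel G.Adj]
    (hG : G.Connected) (hcard : 2 ≤ Fintype.card V) (a : V)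
    (T : Finset ℚ)
    (hT : ∀ θ : ℝ, inSupport (normLap G) a θ ↔ ∃ q ∈ T, (q : ℝ) = θ) :
    IsLeast {τ : ℝ | 0 < τ ∧
        (qwalk G τ).mulVec (Pi.single a 1) = (Pi.single a 1 : V → ℂ)}
      (2 * (mOf T : ℝ) * Real.pi / (gOf T : ℝ)) ∧
    ∀ τ : ℝ, 0 < τ →
      (qwalk G τ).mulVec (Pi.single a 1) = (Pi.single a 1 : V → ℂ) →
      ∃ n : ℤ, τ = (n : ℝ) * (2 * (mOf T : ℝ) * Real.pi / (gOf T : ℝ)) := by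
  obtain ⟨hne, hiff⟩ := period_iff_T G hG hcard a T hT
  have hg : (0:ℝ) < (gOf T : ℝ) := by exact_mod_cast gOf_pos hne
  have hm : (0:ℝ) < (mOf T : ℝ) := by exact_mod_cast mOf_pos T
  set τ₀ : ℝ := 2 * (mOf T : ℝ) * Real.pi / (gOf T : ℝ) with hτ₀
  have hτ₀pos : 0 < τ₀ := by
    apply div_pos _ hg
    positivity
  have hchar : ∀ τ : ℝ, (qwalk G τ).mulVec (Pi.single a 1) = (Pi.single a 1 : V → ℂ) ↔
      ∃ n : ℤ, τ = n * τ₀ := by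
    intro τ
    rw [hiff τ]
    exact period_iff_int T hne τ
  constructor
  · constructor
    · refine ⟨hτ₀pos, ?_⟩
      rw [hchar]
      exact ⟨1, by rw [Int.cast_one, one_mul]⟩
    · rintro τ ⟨hτpos, hτper⟩
      obtain ⟨n, hn⟩ := (hchar τ).mp hτper
      have hn1 : (1:ℤ) ≤ n := by
        by_contra hcon
        push_neg at hcon
        have : (n : ℝ) ≤ 0 := by exact_mod_cast Int.lt_add_one_iff.mp (by omega)
        nlinarith
      have : (1:ℝ) ≤ (n:ℝ) := by exact_mod_cast hn1
      rw [hn]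
      nlinarith
  · intro τ hτpos hτper
    exact (hchar τ).mp hτper
end

section
/- Let G be a finite simple graph with all degrees positive and normalized Laplacian 𝓛, let a be a vertex, and let θ be an eigenvalue of 𝓛 in the eigenvalue support of a. If θ' is a real number that is an algebraic conjugate of θ over ℚ (i.e., θ and θ' have the same minimal polynomial over ℚ), then θ' is also an eigenvalue of 𝓛 lying in the eigenvalue support of a. In other words, the eigenvalue support of any vertex is closed under taking algebraic conjugates. -/
open Matrix

set_option maxHeartbeats 1000000 in
set_option synthInstance.maxHeartbeats 400000 in
open Polynomial in
/-- Auxiliary: eigenvector support transfers along algebraic conjugation for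
matrices with rational entries. -/
lemma conj_transfer {V : Type*} [Fintype V] [DecidableEq V]
    (Mq : Matrix V V ℚ) (a : V) (θ θ' : ℝ)
    (hconj : minpoly ℚ θ = minpoly ℚ θ')
    (w : V → ℝ) (hw : (Mq.map (fun q => (q : ℝ))).mulVec w = θ • w) (ha : w a ≠ 0) :
    ∃ u : V → ℝ, (Mq.map (fun q => (q : ℝ))).mulVec u = θ' • u ∧ u a ≠ 0 := by
  classical
  set Mr : Matrix V V ℝ := Mq.map (fun q => (q : ℝ)) with hMr
  have hMralg : Mr = Mq.map (algebraMap ℚ ℝ) := rfl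
  have hw0 : w ≠ 0 := fun h => ha (by simp [h])
  -- θ is algebraic over ℚ
  have hdet : (Matrix.scalar V θ - Mr).det = 0 := by
    rw [← Matrix.exists_mulVec_eq_zero_iff]
    refine ⟨w, hw0, ?_⟩
    rw [Matrix.sub_mulVec, hw, Matrix.scalar_apply, Matrix.diagonal_const_mulVec]
    simp
  have halg : IsAlgebraic ℚ θ := by
    refine ⟨Mq.charpoly, (Mq.charpoly_monic).ne_zero, ?_⟩
    rw [Polynomial.aeval_def, Polynomial.eval₂_eq_eval_map, ← Matrix.charpoly_map,
      ← hMralg, Matrix.charpoly, eval_det, Matrix.matPolyEquiv_charmatrix,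
      Polynomial.eval_sub, Polynomial.eval_X, Polynomial.eval_C]
    exact hdet
  have hint : IsIntegral ℚ θ := halg.isIntegral
  have hroot' : Polynomial.aeval θ' (minpoly ℚ θ) = 0 := by
    rw [hconj]; exact minpoly.aeval ℚ θ'
  -- the field ℚ(θ) and the conjugation embedding σ : ℚ(θ) → ℝ with σ θ = θ'
  set F : IntermediateField ℚ ℝ := IntermediateField.adjoin ℚ {θ} with hF
  set σ : F →ₐ[ℚ] ℝ :=
    (AdjoinRoot.liftAlgHom (minpoly ℚ θ) (Algebra.ofId ℚ ℝ) θ'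
      (by rw [Algebra.toRingHom_ofId, ← Polynomial.aeval_def]; exact hroot')).comp
      (IntermediateField.adjoinRootEquivAdjoin ℚ hint).symm.toAlgHom with hσ
  set θF : F := IntermediateField.AdjoinSimple.gen ℚ θ with hθF
  have hσθ : σ θF = θ' := by
    rw [hσ, hθF]
    erw [AlgHom.comp_apply]
    erw [IntermediateField.adjoinRootEquivAdjoin_symm_apply_gen ℚ hint]
    simp
  have hθFcoe : (θF : ℝ) = θ := rfl
  -- a basis of ℝ over ℚ(θ)
  let b : Module.Basis (Module.Basis.ofVectorSpaceIndex F ℝ) F ℝ := Module.Basis.ofVectorSpace F ℝ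
  set mF : V → V → F := fun u j => algebraMap ℚ F (Mq u j) with hmF
  have hmFcoe : ∀ u j, (algebraMap F ℝ) (mF u j) = Mr u j := by
    intro u j
    rw [hmF, ← IsScalarTower.algebraMap_apply ℚ F ℝ]
    rfl
  -- the coordinate vectors are eigenvectors over ℚ(θ)
  have hcoord : ∀ (i) (x : V),
      ∑ j, mF x j * ((Finsupp.lapply i : _ →ₗ[F] F).comp b.repr.toLinearMap) (w j)
        = θF * ((Finsupp.lapply i : _ →ₗ[F] F).comp b.repr.toLinearMap) (w x) := by
    intro i x
    set c : ℝ →ₗ[F] F := (Finsupp.lapply i : _ →ₗ[F] F).comp b.repr.toLinearMap with hc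
    have hx : ∑ j, Mr x j * w j = θ * w x := by
      have := congrFun hw x
      simpa [Matrix.mulVec, dotProduct] using this
    have hx2 : ∑ j, (mF x j) • w j = θF • w x := by
      calc ∑ j, (mF x j) • w j = ∑ j, Mr x j * w j := by
            refine Finset.sum_congr rfl fun j _ => ?_
            rw [Algebra.smul_def, hmFcoe]
          _ = θ * w x := hx
          _ = θF • w x := by
            rw [Algebra.smul_def, IntermediateField.algebraMap_apply, hθFcoe]
    calc ∑ j, mF x j * c (w j) = c (∑ j, (mF x j) • w j) := by
          rw [map_sum]
          refine Finset.sum_congr rfl fun j _ => ?_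
          rw [LinearMap.map_smul, smul_eq_mul]
        _ = c (θF • w x) := by rw [hx2]
        _ = θF * c (w x) := by rw [LinearMap.map_smul, smul_eq_mul]
  -- a coordinate where the entry at `a` is nonzero
  have hrepr : b.repr (w a) ≠ 0 := by
    intro h
    apply ha
    have := b.repr.injective (a₁ := w a) (a₂ := 0) (by simpa using h)
    simpa using this
  obtain ⟨i, hi⟩ : ∃ i, b.repr (w a) i ≠ 0 := by
    by_contra hcon
    push_neg at hcon
    exact hrepr (Finsupp.ext hcon)
  have hci : ∀ x, ((Finsupp.lapply i : _ →ₗ[F] F).comp b.repr.toLinearMap) (w x)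
      = b.repr (w x) i := fun x => rfl
  have hσM : ∀ x j, σ (mF x j) = Mr x j := by
    intro x j
    rw [hmF]
    rw [AlgHom.commutes]
    exact ((hmFcoe x j).symm.trans (by rw [hmF, ← IsScalarTower.algebraMap_apply ℚ F ℝ])).symm
  -- the conjugated eigenvector
  refine ⟨fun x => σ (b.repr (w x) i), ?_, ?_⟩
  · funext x
    have : ∑ j, Mr x j * σ (b.repr (w j) i) = θ' * σ (b.repr (w x) i) := by
      have h1 : ∑ j, Mr x j * σ (b.repr (w j) i)
          = σ (∑ j, mF x j * (b.repr (w j) i)) := by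
        rw [map_sum]
        refine Finset.sum_congr rfl fun j _ => ?_
        rw [_root_.map_mul, hσM]
      have h2 := hcoord i x
      rw [hci] at h2
      simp only [hci] at h2
      rw [h1, h2, _root_.map_mul, hσθ]
    simpa [Matrix.mulVec, dotProduct] using this
  · simp only [ne_eq]
    intro h
    exact hi (by simpa using (σ.toRingHom.injective (by simpa using h)))

/-- The rational matrix `(D-A)D⁻¹`, similar to the normalized Laplacian. -/
noncomputable def MqM {V : Type*} [Fintype V] [DecidableEq V]
    (G : SimpleGraph V) [DecidableRel G.Adj] : Matrix V V ℚ :=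
  fun u j => (((if u = j then (G.degree u : ℚ) else 0) - (if G.Adj u j then 1 else 0))) /
    (G.degree j)

lemma MqM_map_apply {V : Type*} [Fintype V] [DecidableEq V]
    (G : SimpleGraph V) [DecidableRel G.Adj] (u j : V) :
    ((MqM G).map (fun q => (q : ℝ))) u j =
      (((if u = j then (G.degree u : ℝ) else 0) - (if G.Adj u j then 1 else 0))) /
        (G.degree j) := by
  rcases eq_or_ne u j with h | h
  · subst h
    by_cases h2 : G.Adj u u <;> simp [MqM, h2] <;> push_cast <;> ring
  · by_cases h2 : G.Adj u j <;> simp [MqM, h, h2] <;> push_cast <;> ring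

lemma eigen_iff {V : Type*} [Fintype V] [DecidableEq V]
    (G : SimpleGraph V) [DecidableRel G.Adj] (hdeg : ∀ v : V, 0 < G.degree v)
    (θ : ℝ) (v : V → ℝ) :
    (normLap G).mulVec v = θ • v ↔
      ((MqM G).map (fun q => (q : ℝ))).mulVec (fun x => Real.sqrt (G.degree x) * v x)
        = θ • (fun x => Real.sqrt (G.degree x) * v x) := by
  set s : V → ℝ := fun x => Real.sqrt (G.degree x) with hs
  have hspos : ∀ x, 0 < s x := fun x => Real.sqrt_pos.2 (by exact_mod_cast hdeg x)
  have hss : ∀ x, s x * s x = (G.degree x : ℝ) := fun x =>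
    Real.mul_self_sqrt (by positivity)
  have hL : ∀ u j, normLap G u j =
      (s u)⁻¹ * (((if u = j then (G.degree u : ℝ) else 0) - (if G.Adj u j then 1 else 0)))
        * (s j)⁻¹ := by
    intro u j
    simp [normLap, Matrix.mul_diagonal, Matrix.diagonal_mul, Matrix.sub_apply,
      Matrix.diagonal_apply, SimpleGraph.adjMatrix_apply, hs]
  have key : ∀ u, (((MqM G).map (fun q => (q : ℝ))).mulVec (fun x => s x * v x)) u
      = s u * ((normLap G).mulVec v) u := by
    intro u
    simp only [Matrix.mulVec, dotProduct, MqM_map_apply, hL, Finset.mul_sum]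
    refine Finset.sum_congr rfl fun j _ => ?_
    have h1 : (G.degree j : ℝ) ≠ 0 := by exact_mod_cast (hdeg j).ne'
    have h2 : s j ≠ 0 := (hspos j).ne'
    have h3 : s u ≠ 0 := (hspos u).ne'
    field_simp
    rw [← hss j]
    ring
  constructor
  · intro h
    funext u
    have hk := key u
    rw [h] at hk
    simp only [hs] at hk
    simp only [hk, Pi.smul_apply, smul_eq_mul]
    ring
  · intro h
    funext u
    have h2 := congrFun h u
    rw [key u] at h2
    simp only [Pi.smul_apply, smul_eq_mul] at h2 ⊢
    have h3 : s u ≠ 0 := (hspos u).ne'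
    exact mul_left_cancel₀ h3 (by rw [h2]; ring)

/-- the eigenvalue support of a vertex is closed under algebraic
conjugation over `ℚ`. -/
theorem support_closed_under_conjugates {V : Type*} [Fintype V] [DecidableEq V]
    (G : SimpleGraph V) [DecidableRel G.Adj]
    (hdeg : ∀ v : V, 0 < G.degree v)
    (a : V) (θ θ' : ℝ)
    (hθ : inSupport (normLap G) a θ)
    (hconj : minpoly ℚ θ = minpoly ℚ θ') :
    inSupport (normLap G) a θ' := by
  obtain ⟨v, hv0, hveq, hva⟩ := hθ
  have hw := (eigen_iff G hdeg θ v).1 hveq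
  have hwa : Real.sqrt (G.degree a) * v a ≠ 0 := by
    have : (0:ℝ) < Real.sqrt (G.degree a) := Real.sqrt_pos.2 (by exact_mod_cast hdeg a)
    exact mul_ne_zero this.ne' hva
  obtain ⟨u, hu, hua⟩ := conj_transfer (MqM G) a θ θ' hconj _ hw hwa
  set v' : V → ℝ := fun x => (Real.sqrt (G.degree x))⁻¹ * u x with hv'
  have hsv : ∀ x, Real.sqrt (G.degree x) ≠ 0 := fun x =>
    (Real.sqrt_pos.2 (by exact_mod_cast hdeg x)).ne'
  have hfix : (fun x => Real.sqrt (G.degree x) * v' x) = u := by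
    funext x
    rw [hv']
    exact mul_inv_cancel_left₀ (hsv x) (u x)
  have heq : (normLap G).mulVec v' = θ' • v' := by
    rw [eigen_iff G hdeg θ' v', hfix]
    exact hu
  refine ⟨v', ?_, heq, ?_⟩
  · intro h
    apply hua
    have := congrFun hfix a
    rw [h] at this
    simpa using this.symm
  · exact fun h => hua (by rw [← hfix]; simp [h])
end

section
/- Let G be a connected finite simple graph on at least three vertices with normalized Laplacian 𝓛, and let a and b be strongly cospectral vertices with positive eigenvalue support S⁺ and negative eigenvalue support S⁻. Then S⁺ contains at least two distinct eigenvalues and S⁻ contains at least one eigenvalue. -/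
open Matrix

section Aux

variable {V : Type*} [Fintype V] [DecidableEq V] (G : SimpleGraph V) [DecidableRel G.Adj]

lemma normLap_transpose : (normLap G)ᵀ = normLap G := by
  unfold normLap
  rw [Matrix.transpose_mul, Matrix.transpose_mul, Matrix.transpose_sub,
    Matrix.diagonal_transpose, Matrix.diagonal_transpose, SimpleGraph.transpose_adjMatrix,
    Matrix.mul_assoc]

lemma normLap_isHermitian : (normLap G).IsHermitian := by
  rw [Matrix.IsHermitian, Matrix.conjTranspose_eq_transpose_of_trivial]
  exact normLap_transpose G

lemma normLap_apply_ne {x y : V} (h : x ≠ y) :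
    normLap G x y = -((Real.sqrt (G.degree x))⁻¹ * (if G.Adj x y then (1:ℝ) else 0) *
      (Real.sqrt (G.degree y))⁻¹) := by
  unfold normLap
  rw [Matrix.mul_diagonal, Matrix.diagonal_mul, Matrix.sub_apply, Matrix.diagonal_apply_ne _ h,
    SimpleGraph.adjMatrix_apply]
  ring

omit [DecidableEq V] in
lemma degree_pos_of_connected (hG : G.Connected) (h2 : 1 < Fintype.card V) (v : V) :
    0 < G.degree v := by
  rw [G.degree_pos_iff_exists_adj]
  have : Nontrivial V := Fintype.one_lt_card_iff_nontrivial.mp h2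
  obtain ⟨u, hu⟩ := exists_ne v
  obtain ⟨p⟩ := hG.preconnected v u
  cases p with
  | nil => exact absurd rfl hu.symm
  | cons h _ => exact ⟨_, h⟩

lemma normLap_mulVec_sqrt (hdeg : ∀ v, 0 < G.degree v) :
    (normLap G).mulVec (fun v => Real.sqrt (G.degree v)) = 0 := by
  have hs : ∀ v, Real.sqrt (G.degree v) ≠ 0 := fun v =>
    ne_of_gt (Real.sqrt_pos.mpr (by exact_mod_cast hdeg v))
  unfold normLap
  rw [← Matrix.mulVec_mulVec, ← Matrix.mulVec_mulVec]
  have h1 : (Matrix.diagonal fun v => (Real.sqrt (G.degree v))⁻¹) *ᵥ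
      (fun v => Real.sqrt (G.degree v)) = fun _ => (1:ℝ) := by
    funext x
    rw [Matrix.mulVec_diagonal]
    exact inv_mul_cancel₀ (hs x)
  rw [h1]
  have h2 : (Matrix.diagonal (fun v => (G.degree v : ℝ)) - G.adjMatrix ℝ) *ᵥ
      (fun _ => (1:ℝ)) = 0 := by
    funext x
    rw [Matrix.sub_mulVec, Pi.sub_apply, Matrix.mulVec_diagonal,
      SimpleGraph.adjMatrix_mulVec_apply]
    simp only [mul_one, Finset.sum_const, nsmul_eq_mul, Pi.zero_apply, SimpleGraph.degree, sub_self]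
  rw [h2, Matrix.mulVec_zero]

end Aux

/-- for strongly cospectral vertices in a connected graph on at least
three vertices, `|S⁺| ≥ 2` and `|S⁻| ≥ 1`. -/
theorem Splus_two_Sminus_nonempty {V : Type*} [Fintype V] [DecidableEq V]
    (G : SimpleGraph V) [DecidableRel G.Adj]
    (hG : G.Connected) (hcard : 3 ≤ Fintype.card V) (a b : V) (hab : a ≠ b)
    (hsc : StronglyCospectral (normLap G) a b) :
    (∃ θ₁ θ₂ : ℝ, θ₁ ≠ θ₂ ∧ Splus (normLap G) a b θ₁ ∧ Splus (normLap G) a b θ₂) ∧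
    (∃ θ : ℝ, Sminus (normLap G) a b θ) := by
  classical
  have hdeg : ∀ v, 0 < G.degree v := degree_pos_of_connected G hG (by omega)
  have hsq : ∀ v : V, 0 < Real.sqrt (G.degree v) :=
    fun v => Real.sqrt_pos.mpr (by exact_mod_cast hdeg v)
  have hA : (normLap G).IsHermitian := normLap_isHermitian G
  have hT : (normLap G)ᵀ = normLap G := normLap_transpose G
  obtain ⟨B, θv, hune, heig, hortho, hcomplete⟩ :
      ∃ (B : V → V → ℝ) (θv : V → ℝ),
        (∀ i, B i ≠ 0) ∧
        (∀ i, (normLap G) *ᵥ B i = θv i • B i) ∧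
        (∀ x y : V, ∑ i : V, B i x * B i y = if x = y then (1:ℝ) else 0) ∧
        (∀ y : V → ℝ, (∀ i, B i ⬝ᵥ y = 0) → y = 0) := by
    refine ⟨fun i => ⇑(hA.eigenvectorBasis i), hA.eigenvalues, ?_, ?_, ?_, ?_⟩
    · intro i h
      exact hA.eigenvectorBasis.orthonormal.ne_zero i (by ext x; exact congrFun h x)
    · exact hA.mulVec_eigenvectorBasis
    · intro x y
      have h := hA.eigenvectorBasis.sum_inner_mul_inner
        (EuclideanSpace.single x (1:ℝ)) (EuclideanSpace.single y (1:ℝ))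
      simp only [EuclideanSpace.inner_single_left, EuclideanSpace.inner_single_right,
        starRingEnd_apply, star_one, one_mul, mul_one, star_trivial,
        EuclideanSpace.single_apply] at h
      rw [show (if x = y then (1:ℝ) else 0) = if y = x then 1 else 0 by simp [eq_comm]]
      exact h
    · intro y hy
      have hzero : (WithLp.toLp 2 y : EuclideanSpace ℝ V) = 0 := by
        have hrepr := hA.eigenvectorBasis.sum_repr' (WithLp.toLp 2 y : EuclideanSpace ℝ V)
        rw [← hrepr]
        apply Finset.sum_eq_zero
        intro i _
        have hi : (inner ℝ (hA.eigenvectorBasis i) (WithLp.toLp 2 y : EuclideanSpace ℝ V) : ℝ) = 0 := by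
          simp only [PiLp.inner_apply, RCLike.inner_apply, conj_trivial]
          simpa [dotProduct, mul_comm] using hy i
        rw [hi, zero_smul]
      simpa using congrArg WithLp.ofLp hzero
  have hsign : ∀ i : V, B i b = B i a ∨ B i b = - B i a := by
    intro i
    rcases hsc (θv i) with h | h
    · exact Or.inl (h _ (heig i)).symm
    · right; have := h _ (heig i); linarith
  -- S⁻ is nonempty
  have hminus : ∃ θ' : ℝ, Sminus (normLap G) a b θ' := by
    by_contra hno
    push_neg at hno
    have key : ∀ i : V, B i a * B i b = B i a * B i a := by
      intro i
      by_cases hc : B i a = 0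
      · rw [hc]; ring
      · rcases hsc (θv i) with h | h
        · rw [h _ (heig i)]
        · exact absurd ⟨⟨_, hune i, heig i, hc⟩, h⟩ (hno _)
    have h0 := hortho a b
    have h1 := hortho a a
    rw [if_neg hab] at h0
    rw [if_pos rfl] at h1
    rw [Finset.sum_congr rfl (fun i _ => key i)] at h0
    rw [h0] at h1
    exact zero_ne_one h1
  -- 0 ∈ S⁺
  have hw0 : (normLap G) *ᵥ (fun v => Real.sqrt (G.degree v))
      = (0:ℝ) • (fun v => Real.sqrt (G.degree v)) := by
    rw [zero_smul]; exact normLap_mulVec_sqrt G hdeg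
  have hplus0 : Splus (normLap G) a b 0 := by
    refine ⟨⟨_, ?_, hw0, ne_of_gt (hsq a)⟩, ?_⟩
    · intro h; exact (ne_of_gt (hsq a)) (congrFun h a)
    · rcases hsc 0 with h | h
      · exact h
      · exfalso
        have h2 := h _ hw0
        have h3 := hsq a
        have h4 := hsq b
        linarith
  refine ⟨?_, hminus⟩
  rcases Classical.em (∃ θ' : ℝ, θ' ≠ 0 ∧ Splus (normLap G) a b θ') with ⟨θ', hne, hp⟩ | hnone
  · exact ⟨θ', 0, hne, hp, hplus0⟩
  exfalso
  push_neg at hnone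
  set e : V → ℝ := Pi.single a 1 + Pi.single b 1 with he
  have hcoef : ∀ i : V, θv i * (B i a + B i b) = 0 := by
    intro i
    by_cases hcd : B i a + B i b = 0
    · rw [hcd, mul_zero]
    · have hca : B i a ≠ 0 := by
        intro h0
        rcases hsign i with h | h <;> rw [h, h0] at hcd <;> simp at hcd
      have hplusi : Splus (normLap G) a b (θv i) := by
        rcases hsc (θv i) with h | h
        · exact ⟨⟨_, hune i, heig i, hca⟩, h⟩
        · exfalso
          have h2 := h _ (heig i)
          exact hcd (by linarith)
      have hz : θv i = 0 := by
        by_contra hz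
        exact hnone _ hz hplusi
      rw [hz, zero_mul]
  have hLe : (normLap G) *ᵥ e = 0 := by
    apply hcomplete
    intro i
    rw [Matrix.dotProduct_mulVec, ← Matrix.mulVec_transpose, hT, heig i, he]
    simp only [smul_dotProduct, dotProduct_add, dotProduct_single,
      mul_one, smul_eq_mul, Pi.smul_apply, Pi.add_apply]
    have := hcoef i
    linarith
  have hentry : ∀ x y : V, x ≠ y →
      (normLap G x y ≤ 0 ∧ (G.Adj x y → normLap G x y < 0)) := by
    intro x y hxy
    have h1 : 0 < (Real.sqrt (G.degree x))⁻¹ := inv_pos.mpr (hsq x)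
    have h2 : 0 < (Real.sqrt (G.degree y))⁻¹ := inv_pos.mpr (hsq y)
    rw [normLap_apply_ne G hxy]
    by_cases h : G.Adj x y
    · rw [if_pos h]
      constructor
      · nlinarith
      · intro _; nlinarith
    · rw [if_neg h]
      constructor
      · simp
      · intro hadj; exact absurd hadj h
  have hnadj : ∀ x : V, x ≠ a → x ≠ b → ¬ G.Adj x a ∧ ¬ G.Adj x b := by
    intro x hxa hxb
    have hx2 : normLap G x a + normLap G x b = 0 := by
      have hx := congrFun hLe x
      rw [he] at hx
      simpa [Matrix.mulVec_add] using hx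
    have ha' := hentry x a hxa
    have hb' := hentry x b hxb
    constructor
    · intro hadj; have := ha'.2 hadj; linarith [hb'.1]
    · intro hadj; have := hb'.2 hadj; linarith [ha'.1]
  obtain ⟨z, hza, hzb⟩ : ∃ z : V, z ≠ a ∧ z ≠ b := by
    have hpair : ({a, b} : Finset V).card = 2 := Finset.card_pair hab
    have h2 : (({a, b} : Finset V)ᶜ).Nonempty := by
      rw [← Finset.card_pos, Finset.card_compl]
      omega
    obtain ⟨z, hz⟩ := h2
    simp only [Finset.mem_compl, Finset.mem_insert, Finset.mem_singleton, not_or] at hz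
    exact ⟨z, hz.1, hz.2⟩
  have noWalk : ∀ (x w : V) (p : G.Walk x w), x = a ∨ x = b → w ≠ a → w ≠ b → False := by
    intro x w p
    induction p with
    | nil =>
      intro h hwa hwb
      rcases h with h | h
      exacts [hwa h, hwb h]
    | @cons x' y' w' hadj p ih =>
      intro hu hwa hwb
      refine ih ?_ hwa hwb
      by_cases hva : y' = a
      · exact Or.inl hva
      by_cases hvb : y' = b
      · exact Or.inr hvb
      exfalso
      have hn := hnadj y' hva hvb
      rcases hu with rfl | rfl
      · exact hn.1 hadj.symm
      · exact hn.2 hadj.symm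
  obtain ⟨p⟩ := hG.preconnected a z
  exact noWalk a z p (Or.inl rfl) hza hzb
end

section
/- Let G be a finite tree (connected acyclic simple graph) on at least two vertices with combinatorial Laplacian L = D − A and degree matrix D. Let p ≥ 0 and q ≥ 1 be coprime integers, and let w : V → ℤ be an integer vector whose entries have greatest common divisor 1 and which satisfies q·(L w) = p·(D w) (entrywise, so w corresponds to an eigenvector of D^{-1}L with eigenvalue p/q). Then all entries of w are congruent to each other modulo p. -/
open Matrix

open Finset in
/-- in a tree, an integer vector with coprime entries satisfying
`q·(L w) = p·(D w)` has all its entries congruent modulo `p`. -/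
theorem tree_eigvec_entries_congruent {V : Type*} [Fintype V] [DecidableEq V]
    (G : SimpleGraph V) [DecidableRel G.Adj]
    (hG : G.IsTree) (hcard : 2 ≤ Fintype.card V)
    (p q : ℤ) (hp : 0 ≤ p) (hq : 1 ≤ q) (hpq : IsCoprime p q)
    (w : V → ℤ) (hw : Finset.univ.gcd w = 1)
    (heig : q • ((Matrix.diagonal (fun v => (G.degree v : ℤ)) - G.adjMatrix ℤ).mulVec w) =
            p • ((Matrix.diagonal (fun v => (G.degree v : ℤ))).mulVec w)) :
    ∀ u v : V, w u ≡ w v [ZMOD p] := by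
  classical
  have heq : ∀ x : V, q * ((G.degree x : ℤ) * w x - ∑ y ∈ G.neighborFinset x, w y)
      = p * ((G.degree x : ℤ) * w x) := by
    intro x
    have := congrFun heig x
    simpa [Matrix.sub_mulVec, Matrix.mulVec_diagonal, SimpleGraph.adjMatrix_mulVec_apply,
      Pi.smul_apply, smul_eq_mul] using this
  have key : ∀ u v : V, G.Adj u v → p ∣ (w u - w v) := by
    intro u v huv
    set H := G \ SimpleGraph.fromEdgeSet {s(u,v)} with hH
    have hbr : ¬ H.Reachable u v := by
      have := (SimpleGraph.isAcyclic_iff_forall_adj_isBridge.mp hG.2) huv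
      exact this
    set S : Finset V := Finset.univ.filter (fun x => H.Reachable u x) with hS
    have huS : u ∈ S := by
      simp only [hS, mem_filter, mem_univ, true_and]
      exact SimpleGraph.Reachable.refl u
    have hvS : v ∉ S := by simp [hS, hbr]
    have hHadj : ∀ x y : V, G.Adj x y → s(x,y) ≠ s(u,v) → H.Adj x y := by
      intro x y hxy hne
      rw [hH]
      simp [SimpleGraph.fromEdgeSet_adj, hxy, hne, hxy.ne]
    have hclosed : ∀ x y : V, x ∈ S → G.Adj x y → y ∉ S → x = u ∧ y = v := by
      intro x y hx hxy hy
      simp only [hS, mem_filter, mem_univ, true_and] at hx hy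
      by_cases hne : s(x,y) = s(u,v)
      · rw [Sym2.eq_iff] at hne
        rcases hne with ⟨rfl, rfl⟩ | ⟨rfl, rfl⟩
        · exact ⟨rfl, rfl⟩
        · exact absurd hx hbr
      · exact absurd (hx.trans (hHadj x y hxy hne).reachable) hy
    have hsum : q * (∑ x ∈ S, ((G.degree x : ℤ) * w x - ∑ y ∈ G.neighborFinset x, w y))
        = p * ∑ x ∈ S, (G.degree x : ℤ) * w x := by
      rw [Finset.mul_sum, Finset.mul_sum]
      exact Finset.sum_congr rfl fun x _ => heq x
    set f : V → V → ℤ := fun x y => if G.Adj x y then w x - w y else 0 with hf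
    have hterm : ∀ x : V, (G.degree x : ℤ) * w x - ∑ y ∈ G.neighborFinset x, w y
        = ∑ y : V, f x y := by
      intro x
      rw [hf]
      rw [← Finset.sum_filter, ← SimpleGraph.neighborFinset_eq_filter,
        Finset.sum_sub_distrib, Finset.sum_const]
      rw [nsmul_eq_mul]
      rfl
    have hzero : ∑ x ∈ S, ∑ y ∈ S, f x y = 0 := by
      have h2 : (∑ x ∈ S, ∑ y ∈ S, f x y) = - ∑ x ∈ S, ∑ y ∈ S, f x y := by
        conv_lhs => rw [Finset.sum_comm]
        rw [← Finset.sum_neg_distrib]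
        refine Finset.sum_congr rfl fun y _ => ?_
        rw [← Finset.sum_neg_distrib]
        refine Finset.sum_congr rfl fun x _ => ?_
        by_cases hadj : G.Adj x y
        · simp [hf, hadj, hadj.symm]
        · have hadj' : ¬ G.Adj y x := fun h => hadj h.symm
          simp [hf, hadj, hadj']
      linarith
    have hcross : ∑ x ∈ S, ∑ y ∈ Sᶜ, f x y = w u - w v := by
      rw [Finset.sum_eq_single_of_mem u huS]
      · rw [Finset.sum_eq_single_of_mem v (Finset.mem_compl.mpr hvS)]
        · simp [hf, huv]
        · intro y hy hyv
          by_cases hadj : G.Adj u y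
          · exact absurd (hclosed u y huS hadj (Finset.mem_compl.mp hy)).2 hyv
          · simp [hf, hadj]
      · intro x hx hxu
        apply Finset.sum_eq_zero
        intro y hy
        by_cases hadj : G.Adj x y
        · exact absurd (hclosed x y hx hadj (Finset.mem_compl.mp hy)).1 hxu
        · simp [hf, hadj]
    have hlap : (∑ x ∈ S, ((G.degree x : ℤ) * w x - ∑ y ∈ G.neighborFinset x, w y))
        = w u - w v := by
      calc ∑ x ∈ S, ((G.degree x : ℤ) * w x - ∑ y ∈ G.neighborFinset x, w y)
          = ∑ x ∈ S, ∑ y : V, f x y := Finset.sum_congr rfl fun x _ => hterm x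
        _ = ∑ x ∈ S, (∑ y ∈ S, f x y + ∑ y ∈ Sᶜ, f x y) :=
            Finset.sum_congr rfl fun x _ => (Finset.sum_add_sum_compl S (f x)).symm
        _ = (∑ x ∈ S, ∑ y ∈ S, f x y) + ∑ x ∈ S, ∑ y ∈ Sᶜ, f x y := Finset.sum_add_distrib
        _ = w u - w v := by rw [hzero, hcross, zero_add]
    rw [hlap] at hsum
    exact hpq.dvd_of_dvd_mul_left ⟨_, hsum⟩
  intro u v
  obtain ⟨wk⟩ := hG.1.preconnected u v
  induction wk with
  | nil => rfl
  | @cons a b c h' pw ih =>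
      refine Int.ModEq.trans ?_ ih
      rw [Int.modEq_iff_dvd, show w b - w a = -(w a - w b) by ring]
      exact dvd_neg.mpr (key _ _ h')
end

section
/- Let G be a connected finite simple graph with normalized Laplacian 𝓛, and let a and b be strongly cospectral vertices whose negative eigenvalue support S⁻ consists of a single eigenvalue θ. Then e_a − e_b is an eigenvector of 𝓛 for the eigenvalue θ, i.e., 𝓛 (e_a − e_b) = θ • (e_a − e_b). -/
open Matrix

/-- if the negative eigenvalue support of strongly cospectral vertices
`a, b` is the single eigenvalue `θ`, then `e_a − e_b` is a `θ`-eigenvector of `𝓛`. -/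
theorem single_Sminus_gives_eigenvector {V : Type*} [Fintype V] [DecidableEq V]
    (G : SimpleGraph V) [DecidableRel G.Adj]
    (hG : G.Connected) (a b : V)
    (hsc : StronglyCospectral (normLap G) a b)
    (θ : ℝ) (hmem : Sminus (normLap G) a b θ)
    (huniq : ∀ θ' : ℝ, Sminus (normLap G) a b θ' → θ' = θ) :
    (normLap G).mulVec ((Pi.single a 1 : V → ℝ) - Pi.single b 1) =
      θ • ((Pi.single a 1 : V → ℝ) - Pi.single b 1) := by
  have hL : (normLap G).IsHermitian := by
    have hsym : (normLap G)ᵀ = normLap G := by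
      unfold normLap
      rw [Matrix.transpose_mul, Matrix.transpose_mul, Matrix.transpose_sub,
        Matrix.diagonal_transpose, Matrix.diagonal_transpose,
        SimpleGraph.transpose_adjMatrix, Matrix.mul_assoc]
    unfold Matrix.IsHermitian
    rw [Matrix.conjTranspose]
    rw [hsym]; ext i j; simp
  set w : V → ℝ := (Pi.single a 1 : V → ℝ) - Pi.single b 1 with hw
  set u := hL.eigenvectorBasis with hu
  have key : ∀ i : V, hL.eigenvalues i ≠ θ → (u i : V → ℝ) a = (u i : V → ℝ) b := by
    intro i hne
    have hev : (normLap G).mulVec (u i) = hL.eigenvalues i • ⇑(u i) :=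
      hL.mulVec_eigenvectorBasis i
    rcases hsc (hL.eigenvalues i) with h | h
    · exact h _ hev
    · have hab : (u i : V → ℝ) a = - (u i : V → ℝ) b := h _ hev
      by_cases hz : (u i : V → ℝ) a = 0
      · rw [hz]
        have : (u i : V → ℝ) b = 0 := by
          have := hab; rw [hz] at this; linarith
        rw [this]
      · exfalso
        apply hne
        apply huniq
        refine ⟨⟨⇑(u i), ?_, hev, hz⟩, h⟩
        intro h0
        exact hz (congrFun h0 a)
  have hrepr : ∀ i : V, u.repr (WithLp.toLp 2 w) i = (u i : V → ℝ) a - (u i : V → ℝ) b := by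
    intro i
    rw [u.repr_apply_apply]
    show (inner ℝ (u i) (WithLp.toLp 2 w : EuclideanSpace ℝ V) : ℝ) = _
    rw [PiLp.inner_apply]
    simp only [RCLike.inner_apply, starRingEnd_apply, star_trivial, hw,
      Pi.sub_apply, Pi.single_apply, mul_sub, mul_ite, mul_one, mul_zero, sub_mul, ite_mul, one_mul, zero_mul,
      Finset.sum_sub_distrib, Finset.sum_ite_eq', Finset.mem_univ, if_true]
  have hsum : ∑ i : V, u.repr (WithLp.toLp 2 w) i • (u i : V → ℝ) = w := by
    have := congrArg WithLp.ofLp (u.sum_repr (WithLp.toLp 2 w : EuclideanSpace ℝ V))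
    simpa using this
  have hmw : (normLap G).mulVec w = ∑ i : V, u.repr (WithLp.toLp 2 w) i • (hL.eigenvalues i • (u i : V → ℝ)) := by
    conv_lhs => rw [← hsum]
    rw [← Matrix.mulVecLin_apply, map_sum]
    refine Finset.sum_congr rfl fun i _ => ?_
    rw [_root_.map_smul, Matrix.mulVecLin_apply]
    exact congrArg (fun x => u.repr (WithLp.toLp 2 w) i • x) (hL.mulVec_eigenvectorBasis i)
  rw [hmw]
  conv_rhs => rw [← hsum]
  rw [Finset.smul_sum]
  refine Finset.sum_congr rfl fun i _ => ?_
  by_cases h : hL.eigenvalues i = θ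
  · rw [h, smul_comm]
  · have hz : u.repr (WithLp.toLp 2 w) i = 0 := by
      rw [hrepr i, key i h, sub_self]
    simp [hz]
end

section
/- Let G be a connected finite simple graph with normalized Laplacian 𝓛. If vertices a and b are strongly cospectral with respect to 𝓛, then a and b have the same degree in G. -/
open Matrix

private lemma normLap_sqrtDeg_eig {V : Type*} [Fintype V] [DecidableEq V]
    (G : SimpleGraph V) [DecidableRel G.Adj] (hpos : ∀ v : V, 0 < G.degree v) :
    (normLap G).mulVec (fun v => Real.sqrt (G.degree v)) =
      (0:ℝ) • (fun v => Real.sqrt (G.degree v)) := by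
  have h1 : (Matrix.diagonal (fun v => (Real.sqrt (G.degree v))⁻¹)).mulVec
      (fun v => Real.sqrt (G.degree v)) = fun _ => (1:ℝ) := by
    funext v
    rw [Matrix.mulVec_diagonal]
    exact inv_mul_cancel₀ (Real.sqrt_ne_zero'.2 (by exact_mod_cast hpos v))
  have h2 : ((Matrix.diagonal (fun v => (G.degree v : ℝ)) - G.adjMatrix ℝ)).mulVec
      (fun _ => (1:ℝ)) = 0 := by
    funext v
    rw [Matrix.sub_mulVec]
    have := G.adjMatrix_mulVec_apply v (fun _ => (1:ℝ))
    simp only [Pi.sub_apply, Matrix.mulVec_diagonal, this, Pi.zero_apply,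
      Finset.sum_const, nsmul_eq_mul, mul_one, SimpleGraph.card_neighborFinset_eq_degree]
    ring
  rw [normLap, ← Matrix.mulVec_mulVec, ← Matrix.mulVec_mulVec, h1, h2]
  simp

/-- strongly cospectral vertices (w.r.t. the normalized Laplacian) of a
connected graph have the same degree. -/
theorem stronglyCospectral_same_degree {V : Type*} [Fintype V] [DecidableEq V]
    (G : SimpleGraph V) [DecidableRel G.Adj]
    (hG : G.Connected) (a b : V)
    (hsc : StronglyCospectral (normLap G) a b) :
    G.degree a = G.degree b := by
  by_cases hab : a = b
  · rw [hab]
  · have hpos : ∀ v : V, 0 < G.degree v := by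
      intro v
      rw [G.degree_pos_iff_exists_adj v]
      have : Nontrivial V := ⟨a, b, hab⟩
      obtain ⟨w, hw⟩ := exists_ne v
      obtain ⟨p⟩ := hG.preconnected v w
      cases p with
      | nil => exact absurd rfl hw.symm
      | cons h _ => exact ⟨_, h⟩
    have heig := normLap_sqrtDeg_eig G hpos
    have hsa : (0:ℝ) < Real.sqrt (G.degree a) := Real.sqrt_pos.2 (by exact_mod_cast hpos a)
    have hsb : (0:ℝ) < Real.sqrt (G.degree b) := Real.sqrt_pos.2 (by exact_mod_cast hpos b)
    have key : Real.sqrt (G.degree a) = Real.sqrt (G.degree b) := by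
      rcases hsc 0 with h | h
      · exact h _ heig
      · have := h _ heig
        linarith
    have : (G.degree a : ℝ) = (G.degree b : ℝ) := by
      have := congrArg (fun x => x ^ 2) key
      simpa [Real.sq_sqrt (Nat.cast_nonneg _)] using this
    exact_mod_cast this
end
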